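/- Let W = (𝒫, n) be a Wilson loop diagram and let S ⊆ Fin n satisfy |U| ≤ |Prop(U)| for every U ⊆ S. Then there exists a subset P ⊆ Prop(S) with |P| = |S| such that every U ⊆ S satisfies |U| ≤ |{p ∈ P : V_p ∩ U ≠ ∅}|; that is, S is a basis of the matroid M(W|P) of the subdiagram W|P = (P, n). -/

import Mathlib

open Matroid Set

/-- The support of a propagator: its two endpoints and their cyclic successors. -/
def Vp (n : ℕ) [NeZero n] (p : Fin n × Fin n) : Set (Fin n) :=
  {p.1, p.1 + 1, p.2, p.2 + 1}

/-- The support of a set of propagators. -/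
def VP (n : ℕ) [NeZero n] (P : Set (Fin n × Fin n)) : Set (Fin n) :=
  ⋃ p ∈ P, Vp n p

/-- `propsOf n Ps S` is `Prop(S)`: the propagators of `Ps` whose support meets `S`. -/
def propsOf (n : ℕ) [NeZero n] (Ps : Set (Fin n × Fin n)) (S : Set (Fin n)) :
    Set (Fin n × Fin n) :=
  {p ∈ Ps | (Vp n p ∩ S).Nonempty}

/-- A Wilson loop diagram `(Ps, n)` is well defined if `|V_P| ≥ |P| + 3`
for every nonempty `P ⊆ Ps`. -/
def WellDefinedWLD (n : ℕ) [NeZero n] (Ps : Set (Fin n × Fin n)) : Prop :=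
  ∀ P ⊆ Ps, P.Nonempty → P.ncard + 3 ≤ (VP n P).ncard

/-- If `S` is independent in the Wilson loop diagram `(Ps, n)`
(every `U ⊆ S` has `|U| ≤ |Prop(U)|`), then there is a subset `P ⊆ Prop(S)` with
`|P| = |S|` such that `S` is a basis of the subdiagram `W|P = (P, n)`. -/
theorem independent_set_is_basis_of_subdiagram (n : ℕ) [NeZero n]
    (Ps : Set (Fin n × Fin n)) (S : Set (Fin n))
    (hS : ∀ U ⊆ S, U.ncard ≤ (propsOf n Ps U).ncard) :
    ∃ P ⊆ propsOf n Ps S, P.ncard = S.ncard ∧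
      ∀ U ⊆ S, U.ncard ≤ (propsOf n P U).ncard := by
  classical
  set t : S → Finset (Fin n × Fin n) :=
    fun x => (propsOf n Ps {(x : Fin n)}).toFinset with ht
  have hall : ∀ s : Finset S, s.card ≤ (s.biUnion t).card := by
    intro s
    set U : Set (Fin n) := ↑(s.image Subtype.val) with hU
    have hUS : U ⊆ S := by
      intro x hx
      simp only [hU, Finset.coe_image, mem_image] at hx
      obtain ⟨y, _, rfl⟩ := hx
      exact y.2
    have hcard : U.ncard = s.card := by
      rw [hU, Set.ncard_coe_finset, Finset.card_image_of_injective _ Subtype.val_injective]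
    have heq : propsOf n Ps U = ↑(s.biUnion t) := by
      ext p
      simp only [Finset.coe_biUnion, mem_iUnion, Finset.mem_coe, ht, Set.mem_toFinset]
      simp only [propsOf, mem_setOf_eq, hU, Finset.coe_image]
      constructor
      · rintro ⟨hp, x, hxV, hxU⟩
        simp only [Finset.coe_image, mem_image, Finset.mem_coe] at hxU
        obtain ⟨y, hy, rfl⟩ := hxU
        exact ⟨y, hy, hp, y, hxV, rfl⟩
      · rintro ⟨y, hy, hp, x, hxV, rfl⟩
        refine ⟨hp, y, hxV, ?_⟩
        simp only [Finset.coe_image, mem_image, Finset.mem_coe]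
        exact ⟨y, hy, rfl⟩
    have := hS U hUS
    rwa [hcard, heq, Set.ncard_coe_finset] at this
  obtain ⟨f, hfinj, hft⟩ := (Finset.all_card_le_biUnion_card_iff_exists_injective t).mp hall
  refine ⟨Set.range f, ?_, ?_, ?_⟩
  · rintro p ⟨x, rfl⟩
    have := hft x
    simp only [ht, Set.mem_toFinset] at this; simp only [propsOf, mem_setOf_eq] at this
    obtain ⟨hp, v, hv1, hv2⟩ := this
    exact ⟨hp, v, hv1, by rw [mem_singleton_iff] at hv2; exact hv2 ▸ x.2⟩
  · rw [← Nat.card_coe_set_eq, ← Nat.card_coe_set_eq]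
    exact Nat.card_range_of_injective hfinj
  · intro U hUS
    have : Finite ↥(propsOf n (Set.range f) U) := Set.toFinite _
    have key : ∀ u : U, f ⟨u, hUS u.2⟩ ∈ propsOf n (Set.range f) U := by
      intro u
      refine ⟨⟨⟨u, hUS u.2⟩, rfl⟩, (u : Fin n), ?_, u.2⟩
      have := hft ⟨u, hUS u.2⟩
      simp only [ht, Set.mem_toFinset] at this; simp only [propsOf, mem_setOf_eq] at this
      obtain ⟨_, v, hv1, hv2⟩ := this
      rw [mem_singleton_iff] at hv2
      exact hv2 ▸ hv1
    have hginj : Function.Injective (fun u : U =>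
        (⟨f ⟨u, hUS u.2⟩, key u⟩ : ↥(propsOf n (Set.range f) U))) := by
      intro a b hab
      simp only [Subtype.mk_eq_mk] at hab
      exact Subtype.ext (Subtype.mk_eq_mk.mp (hfinj hab))
    have := Nat.card_le_card_of_injective _ hginj
    rwa [← Nat.card_coe_set_eq, ← Nat.card_coe_set_eq]
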